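/- (Reduction in the case E(X_1) ≤ c) Let n ≥ 2, let X_1, ..., X_n be i.i.d. random variables taking values in [0,1], let c > 0 with E(X_1) ≤ c, and let Y_i = X_i - i·c. Then M(Y_1,...,Y_n) - V(Y_1,...,Y_n) ≤ d_n, where d_n = (n-1)·(1 - 1/(n+1))^n/(n+1). -/

import Mathlib

open MeasureTheory ProbabilityTheory

/-- The σ-algebra generated by `Y 1, ..., Y i`. -/
def priorSigma {Ω : Type*} (Y : ℕ → Ω → ℝ) (i : ℕ) : MeasurableSpace Ω :=
  ⨆ j ∈ Finset.Icc 1 i, MeasurableSpace.comap (Y j) Real.measurableSpace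

/-- `τ` is a stopping rule for `Y 1, ..., Y n`: it takes values in `{1, ..., n}` and
each event `{τ = i}` depends only on `Y 1, ..., Y i`. -/
def IsStopRule {Ω : Type*} (Y : ℕ → Ω → ℝ) (n : ℕ) (τ : Ω → ℕ) : Prop :=
  (∀ ω, τ ω ∈ Finset.Icc 1 n) ∧
  ∀ i ∈ Finset.Icc 1 n, MeasurableSet[priorSigma Y i] {ω | τ ω = i}

/-- `V(Y_1,...,Y_n) = sup_τ E(Y_τ)`: the optimal expected return of the statistician. -/
noncomputable def Vn {Ω : Type*} [MeasurableSpace Ω] (μ : Measure Ω)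
    (Y : ℕ → Ω → ℝ) (n : ℕ) : ℝ :=
  sSup {r | ∃ τ, IsStopRule Y n τ ∧ r = ∫ ω, Y (τ ω) ω ∂μ}

/-- `M(Y_1,...,Y_n) = E(max_{1 ≤ i ≤ n} Y_i)`: the expected return of the prophet. -/
noncomputable def Mn {Ω : Type*} [MeasurableSpace Ω] (μ : Measure Ω)
    (Y : ℕ → Ω → ℝ) (n : ℕ) : ℝ :=
  ∫ ω, sSup ((fun i => Y i ω) '' Set.Icc 1 n) ∂μ


lemma mono1 (j : ℕ) (hj : 1 ≤ j) (a x : ℝ) (ha : 0 < a) (hax : a ≤ x) (hx1 : x ≤ 1)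
    (h : 1 - x ≤ (j:ℝ) * a) : x * (1 - x) ^ j ≤ a * (1 - a) ^ j := by
  rcases eq_or_lt_of_le hx1 with h1 | h1
  · subst h1
    have h1a : (0:ℝ) ≤ 1 - a := by linarith
    simp only [sub_self, zero_pow (by omega : j ≠ 0), mul_zero]
    positivity
  · have hux : 0 < 1 - x := by linarith
    have hu0 : 0 ≤ (x - a) / (1 - x) := div_nonneg (by linarith) (le_of_lt hux)
    have key : (1:ℝ) + j * ((x - a) / (1 - x)) ≤ (1 + (x - a) / (1 - x)) ^ j :=
      one_add_mul_le_pow (by linarith) j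
    have h2 : 1 + (x - a) / (1 - x) = (1 - a) / (1 - x) := by field_simp; ring
    have h3 : (1 - a) ^ j = (1 - x) ^ j * ((1 - a) / (1 - x)) ^ j := by
      rw [div_pow]; field_simp
    rw [h3, ← h2]
    have hp : (0:ℝ) ≤ (1 - x) ^ j := by positivity
    have step1 : a * (1 + (j:ℝ) * ((x - a) / (1 - x))) ≥ x := by
      rw [ge_iff_le, ← sub_nonneg]
      have expand : a * (1 + (j:ℝ) * ((x - a) / (1 - x))) - x
          = ((j:ℝ) * a * (x - a) - (1 - x) * (x - a)) / (1 - x) := by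
        field_simp; ring
      rw [expand]
      apply div_nonneg _ (le_of_lt hux)
      have : (1 - x) * (x - a) ≤ (j:ℝ) * a * (x - a) := by
        apply mul_le_mul_of_nonneg_right h (by linarith)
      linarith
    calc x * (1 - x) ^ j ≤ (a * (1 + (j:ℝ) * ((x - a) / (1 - x)))) * (1 - x) ^ j := by
          apply mul_le_mul_of_nonneg_right step1 hp
      _ ≤ (a * (1 + (x - a) / (1 - x)) ^ j) * (1 - x) ^ j := by
          apply mul_le_mul_of_nonneg_right _ hp
          exact mul_le_mul_of_nonneg_left key (le_of_lt ha)
      _ = a * ((1 - x) ^ j * (1 + (x - a) / (1 - x)) ^ j) := by ring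

lemma mono2 (j : ℕ) (x b : ℝ) (h0 : 0 ≤ x) (hxb : x ≤ b) (hb1 : b ≤ 1)
    (h : (j:ℝ) * b ≤ 1 - x) : x * (1 - x) ^ j ≤ b * (1 - b) ^ j := by
  rcases Nat.eq_zero_or_pos j with hj | hj
  · subst hj; simpa using hxb
  have hx1 : x ≤ 1 := le_trans hxb hb1
  rcases eq_or_lt_of_le hx1 with h1 | h1
  · subst h1
    have hb : b = 1 := le_antisymm hb1 hxb
    simp only [sub_self, zero_pow (by omega : j ≠ 0), mul_zero, hb]
    norm_num
  · have hux : 0 < 1 - x := by linarith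
    have hv0 : 0 ≤ (b - x) / (1 - x) := div_nonneg (by linarith) (le_of_lt hux)
    have key : (1:ℝ) + j * (-((b - x) / (1 - x))) ≤ (1 + (-((b - x) / (1 - x)))) ^ j := by
      apply one_add_mul_le_pow
      have : (b - x) / (1 - x) ≤ 1 := by
        rw [div_le_one hux]; linarith
      linarith
    have h2 : 1 + (-((b - x) / (1 - x))) = (1 - b) / (1 - x) := by field_simp; ring
    have h3 : (1 - b) ^ j = (1 - x) ^ j * ((1 - b) / (1 - x)) ^ j := by
      rw [div_pow]; field_simp
    rw [h3, ← h2]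
    have hp : (0:ℝ) ≤ (1 - x) ^ j := by positivity
    have hb0 : 0 ≤ b := le_trans h0 hxb
    have step1 : b * (1 + (j:ℝ) * (-((b - x) / (1 - x)))) ≥ x := by
      rw [ge_iff_le, ← sub_nonneg]
      have expand : b * (1 + (j:ℝ) * (-((b - x) / (1 - x)))) - x
          = ((1 - x) * (b - x) - (j:ℝ) * b * (b - x)) / (1 - x) := by
        field_simp; ring
      rw [expand]
      apply div_nonneg _ (le_of_lt hux)
      have : (j:ℝ) * b * (b - x) ≤ (1 - x) * (b - x) :=
        mul_le_mul_of_nonneg_right h (by linarith)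
      linarith
    calc x * (1 - x) ^ j ≤ (b * (1 + (j:ℝ) * (-((b - x) / (1 - x))))) * (1 - x) ^ j :=
          mul_le_mul_of_nonneg_right step1 hp
      _ ≤ (b * (1 + (-((b - x) / (1 - x)))) ^ j) * (1 - x) ^ j := by
          apply mul_le_mul_of_nonneg_right _ hp
          exact mul_le_mul_of_nonneg_left key hb0
      _ = b * ((1 - x) ^ j * (1 + (-((b - x) / (1 - x)))) ^ j) := by ring

lemma max_lemma (n : ℕ) (hn : 1 ≤ n) (x : ℝ) (h0 : 0 ≤ x) (h1 : x ≤ 1) :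
    x * (1 - x) ^ n ≤ (1 / ((n:ℝ) + 1)) * (1 - 1 / ((n:ℝ) + 1)) ^ n := by
  have hN : (0:ℝ) < (n:ℝ) + 1 := by positivity
  set b : ℝ := 1 / ((n:ℝ) + 1) with hb
  have hb0 : 0 < b := by positivity
  have hnb : (n:ℝ) * b = 1 - b := by
    rw [hb]; field_simp; ring
  rcases le_total x b with hx | hx
  · apply mono2 n x b h0 hx (by nlinarith) (by nlinarith)
  · apply mono1 n hn b x hb0 hx h1 (by nlinarith)

lemma ell_mono_step (K : ℕ) (hK : 1 ≤ K) :
    ((K:ℝ)/((K:ℝ)+1))^(K+2) ≤ (((K:ℝ)+1)/((K:ℝ)+2))^(K+3) := by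
  have hr : (0:ℝ) < (K:ℝ) := by exact_mod_cast hK
  set r : ℝ := (K:ℝ) with hrdef
  have h1 : (0:ℝ) < r + 1 := by linarith
  have h2 : (0:ℝ) < r + 2 := by linarith
  set u : ℝ := 1/(r*(r+2)) with hu
  have hu0 : 0 < u := by positivity
  have e1 : (r+1)/(r+2) = (r/(r+1)) * (1 + u) := by
    rw [hu]; field_simp; ring
  set p : ℝ := r/(r+1) with hp
  have hp0 : 0 < p := by positivity
  have key : (1:ℝ) + ((K:ℝ)+3) * u ≤ (1+u)^(K+3) := by
    have h := one_add_mul_le_pow (a := u) (by linarith) (K+3)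
    push_cast at h
    linarith
  have step : 1 ≤ p * (1 + ((K:ℝ)+3) * u) := by
    have e2 : p * (1 + ((K:ℝ)+3)*u) = (r^2+3*r+3)/((r+1)*(r+2)) := by
      rw [hp, hu, ← hrdef]; field_simp; ring
    rw [e2, le_div_iff₀ (by positivity)]
    nlinarith
  calc p^(K+2) = p^(K+2) * 1 := by ring
    _ ≤ p^(K+2) * (p * (1 + ((K:ℝ)+3) * u)) := by
        apply mul_le_mul_of_nonneg_left step (by positivity)
    _ = p^(K+3) * (1 + ((K:ℝ)+3) * u) := by ring
    _ ≤ p^(K+3) * (1+u)^(K+3) := by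
        apply mul_le_mul_of_nonneg_left key (by positivity)
    _ = (p * (1+u))^(K+3) := by rw [mul_pow]
    _ = ((r+1)/(r+2))^(K+3) := by rw [← e1]

lemma ell_chain (K L : ℕ) (hK : 1 ≤ K) (hKL : K ≤ L) :
    ((K:ℝ)/((K:ℝ)+1))^(K+2) ≤ ((L:ℝ)/((L:ℝ)+1))^(L+2) := by
  induction L, hKL using Nat.le_induction with
  | base => exact le_refl _
  | succ L hL ih =>
      refine le_trans ih ?_
      have h := ell_mono_step L (le_trans hK hL)
      push_cast
      rw [show L+1+2 = L+3 from by omega, show ((L:ℝ)+1+1) = ((L:ℝ)+2) from by ring]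
      exact h

lemma ell_le_d (n : ℕ) (hn : 2 ≤ n) :
    (((n:ℝ)-2)/((n:ℝ)-1))^n ≤ ((n:ℝ)-1) * (1 - 1/((n:ℝ)+1))^n / ((n:ℝ)+1) := by
  set N : ℝ := (n:ℝ) with hN
  have hN2 : (2:ℝ) ≤ N := by rw [hN]; exact_mod_cast hn
  have h0 : (0:ℝ) < N - 1 := by linarith
  have h1 : (0:ℝ) < N + 1 := by linarith
  have h2 : (0:ℝ) < N := by linarith
  have hA : (0:ℝ) < N^2 - N := by nlinarith
  set t : ℝ := 2/(N^2-N) with ht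
  have ht0 : 0 < t := by positivity
  have ht1 : t ≤ 1 := by rw [ht, div_le_one hA]; nlinarith
  -- (1-t)^n * (1+N*t) ≤ 1
  have bern : 1 + N*t ≤ (1+t)^n := by
    have h := one_add_mul_le_pow (a := t) (by linarith) n
    push_cast at h; rw [← hN] at h; linarith
  have hprod : (1-t)^n * (1+t)^n = (1-t^2)^n := by
    rw [← mul_pow]; ring_nf
  have hle1 : (1-t^2)^n ≤ 1 := by
    apply pow_le_one₀ (by nlinarith) (by nlinarith)
  have key : (1-t)^n * (1+N*t) ≤ 1 := by
    calc (1-t)^n * (1+N*t) ≤ (1-t)^n * (1+t)^n := by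
          apply mul_le_mul_of_nonneg_left bern (pow_nonneg (by linarith) n)
      _ = (1-t^2)^n := hprod
      _ ≤ 1 := hle1
  have hNt : 1 + N*t = (N+1)/(N-1) := by
    rw [ht]; field_simp; ring
  have key2 : (1-t)^n ≤ (N-1)/(N+1) := by
    rw [hNt] at key
    rw [le_div_iff₀ h1]
    calc (1-t)^n * (N+1) = ((1-t)^n * ((N+1)/(N-1))) * (N-1) := by field_simp
      _ ≤ 1 * (N-1) := mul_le_mul_of_nonneg_right key (le_of_lt h0)
      _ = N-1 := by ring
  have hbase : (N-2)/(N-1) = (1 - 1/(N+1)) * (1-t) := by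
    rw [ht]; field_simp; ring
  have hb0 : (0:ℝ) ≤ 1 - 1/(N+1) := by
    rw [sub_nonneg, div_le_one h1]; linarith
  calc ((N-2)/(N-1))^n = (1 - 1/(N+1))^n * (1-t)^n := by rw [hbase, mul_pow]
    _ ≤ (1 - 1/(N+1))^n * ((N-1)/(N+1)) := by
        apply mul_le_mul_of_nonneg_left key2 (by positivity)
    _ = (N-1) * (1 - 1/(N+1))^n / (N+1) := by ring

lemma sum_id (p : ℝ) (K : ℕ) :
    ∑ k ∈ Finset.Icc 1 K, (1-p)^k * (1-(k:ℝ)*p) = K * (1-p)^(K+1) := by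
  induction K with
  | zero => simp
  | succ K ih =>
      rw [Finset.sum_Icc_succ_top (by omega : 1 ≤ K+1), ih]
      push_cast; ring

lemma elem_main (n : ℕ) (hn : 2 ≤ n) (p c : ℝ) (hp0 : 0 ≤ p) (hp1 : p ≤ 1) (hpc : p ≤ c) :
    p * ∑ k ∈ Finset.Icc 1 (n-1), (1-p)^k * max (1 - (k:ℝ)*c) 0
      ≤ ((n:ℝ)-1) * (1 - 1/((n:ℝ)+1))^n / ((n:ℝ)+1) := by
  have hdn : (0:ℝ) ≤ ((n:ℝ)-1) * (1 - 1/((n:ℝ)+1))^n / ((n:ℝ)+1) := by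
    have h1 : (0:ℝ) < (n:ℝ) + 1 := by positivity
    have h2 : (1:ℝ) ≤ (n:ℝ) := by exact_mod_cast (by omega : 1 ≤ n)
    have h3 : (0:ℝ) ≤ 1 - 1/((n:ℝ)+1) := by
      rw [sub_nonneg, div_le_one h1]; linarith
    have := pow_nonneg h3 n
    apply div_nonneg (mul_nonneg (by linarith) this) (le_of_lt h1)
  rcases eq_or_lt_of_le hp0 with hp | hp
  · rw [← hp]; simpa using hdn
  -- p > 0
  have step1 : p * ∑ k ∈ Finset.Icc 1 (n-1), (1-p)^k * max (1 - (k:ℝ)*c) 0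
      ≤ p * ∑ k ∈ Finset.Icc 1 (n-1), (1-p)^k * max (1 - (k:ℝ)*p) 0 := by
    apply mul_le_mul_of_nonneg_left _ hp0
    apply Finset.sum_le_sum
    intro k hk
    apply mul_le_mul_of_nonneg_left _ (pow_nonneg (by linarith) k)
    apply max_le_max _ (le_refl 0)
    have : (k:ℝ) * p ≤ (k:ℝ) * c := mul_le_mul_of_nonneg_left hpc (by positivity)
    linarith
  refine le_trans step1 ?_
  set K : ℕ := min (n-1) (Nat.floor (1/p)) with hK
  have hfl1 : (1:ℕ) ≤ Nat.floor (1/p) := by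
    apply Nat.le_floor
    rw [Nat.cast_one, le_div_iff₀ hp]; linarith
  have hK1 : 1 ≤ K := le_min (by omega) hfl1
  have hKn : K ≤ n - 1 := min_le_left _ _
  have hKp : (K:ℝ) * p ≤ 1 := by
    have h1 : (K:ℝ) ≤ Nat.floor (1/p) := by exact_mod_cast min_le_right (n-1) _
    have h2 : ((Nat.floor (1/p) : ℕ):ℝ) ≤ 1/p := Nat.floor_le (by positivity)
    calc (K:ℝ) * p ≤ (1/p) * p := mul_le_mul_of_nonneg_right (le_trans h1 h2) hp0
      _ = 1 := by field_simp
  have hsum : ∑ k ∈ Finset.Icc 1 (n-1), (1-p)^k * max (1 - (k:ℝ)*p) 0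
      = ∑ k ∈ Finset.Icc 1 K, (1-p)^k * (1 - (k:ℝ)*p) := by
    rw [← Finset.sum_subset (Finset.Icc_subset_Icc_right hKn)]
    · apply Finset.sum_congr rfl
      intro k hk
      rw [max_eq_left]
      rw [sub_nonneg]
      have hkK : k ≤ K := (Finset.mem_Icc.mp hk).2
      calc (k:ℝ) * p ≤ (K:ℝ) * p := by
            apply mul_le_mul_of_nonneg_right _ hp0
            exact_mod_cast hkK
        _ ≤ 1 := hKp
    · intro k hk hk'
      have hk1 : 1 ≤ k := (Finset.mem_Icc.mp hk).1
      have hkK : K < k := by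
        rcases Finset.mem_Icc.mp hk with ⟨a, b⟩
        by_contra hcon
        exact hk' (Finset.mem_Icc.mpr ⟨a, by omega⟩)
      have hKfl : K = Nat.floor (1/p) := by
        rcases Finset.mem_Icc.mp hk with ⟨a, b⟩
        rcases min_cases (n-1) (Nat.floor (1/p)) with ⟨h₁, h₂⟩ | ⟨h₁, h₂⟩
        · omega
        · omega
      have : (1:ℝ) < (k:ℝ) * p := by
        have h2 : 1/p < ((Nat.floor (1/p) : ℕ):ℝ) + 1 := Nat.lt_floor_add_one _
        have h3 : ((Nat.floor (1/p):ℕ):ℝ) + 1 ≤ (k:ℝ) := by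
          have : Nat.floor (1/p) + 1 ≤ k := by omega
          exact_mod_cast this
        have h4 : 1/p < (k:ℝ) := lt_of_lt_of_le h2 h3
        calc (1:ℝ) = (1/p) * p := by field_simp
          _ < (k:ℝ) * p := by apply mul_lt_mul_of_pos_right h4 hp
      rw [max_eq_right (by linarith), mul_zero]
  rw [hsum, sum_id]
  -- now: p * (K * (1-p)^(K+1)) ≤ d_n
  rcases eq_or_lt_of_le hKn with hCase | hCase
  · -- K = n-1
    have hcast : ((K:ℕ):ℝ) = (n:ℝ) - 1 := by
      rw [hCase]; push_cast [Nat.cast_sub (by omega : 1 ≤ n)]; ring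
    have hexp : K + 1 = n := by omega
    rw [hcast, hexp]
    have hml := max_lemma n (by omega) p hp0 hp1
    calc p * (((n:ℝ)-1) * (1-p)^n) = ((n:ℝ)-1) * (p * (1-p)^n) := by ring
      _ ≤ ((n:ℝ)-1) * ((1/((n:ℝ)+1)) * (1 - 1/((n:ℝ)+1))^n) := by
          apply mul_le_mul_of_nonneg_left hml
          have : (1:ℝ) ≤ (n:ℝ) := by exact_mod_cast (by omega : 1 ≤ n)
          linarith
      _ = ((n:ℝ)-1) * (1 - 1/((n:ℝ)+1))^n / ((n:ℝ)+1) := by ring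
  · -- K < n-1, so p > 1/(K+1)
    have hKfl : K = Nat.floor (1/p) := by
      rcases min_cases (n-1) (Nat.floor (1/p)) with ⟨h₁, h₂⟩ | ⟨h₁, h₂⟩
      · omega
      · omega
    have hpa : 1/((K:ℝ)+1) ≤ p := by
      have h2 : 1/p < ((Nat.floor (1/p) : ℕ):ℝ) + 1 := Nat.lt_floor_add_one _
      rw [← hKfl] at h2
      rw [div_le_iff₀ (by positivity)]
      rw [div_lt_iff₀ hp] at h2
      linarith
    have hKc1 : (0:ℝ) < (K:ℝ) + 1 := by positivity
    have m1 := mono1 (K+1) (by omega) (1/((K:ℝ)+1)) p (by positivity) hpa hp1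
      (by
        have : ((K+1:ℕ):ℝ) * (1/((K:ℝ)+1)) = 1 := by push_cast; field_simp
        rw [this]; linarith)
    -- p * (K * (1-p)^(K+1)) ≤ K * (a * (1-a)^(K+1)) = (K/(K+1))^(K+2)
    have hK0 : (0:ℝ) ≤ (K:ℝ) := by positivity
    have chain1 : p * ((K:ℝ) * (1-p)^(K+1)) ≤ ((K:ℝ)/((K:ℝ)+1))^(K+2) := by
      have e : ((K:ℝ)/((K:ℝ)+1))^(K+2) = (K:ℝ) * ((1/((K:ℝ)+1)) * (1 - 1/((K:ℝ)+1))^(K+1)) := by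
        have h1 : 1 - 1/((K:ℝ)+1) = (K:ℝ)/((K:ℝ)+1) := by field_simp; ring
        rw [h1, pow_succ, pow_succ]
        field_simp
      rw [e]
      calc p * ((K:ℝ) * (1-p)^(K+1)) = (K:ℝ) * (p * (1-p)^(K+1)) := by ring
        _ ≤ (K:ℝ) * ((1/((K:ℝ)+1)) * (1 - 1/((K:ℝ)+1))^(K+1)) :=
            mul_le_mul_of_nonneg_left m1 hK0
    have chain2 : ((K:ℝ)/((K:ℝ)+1))^(K+2) ≤ (((n-2:ℕ):ℝ)/(((n-2:ℕ):ℝ)+1))^((n-2)+2) :=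
      ell_chain K (n-2) hK1 (by omega)
    have chain3 : (((n-2:ℕ):ℝ)/(((n-2:ℕ):ℝ)+1))^((n-2)+2)
        ≤ ((n:ℝ)-1) * (1 - 1/((n:ℝ)+1))^n / ((n:ℝ)+1) := by
      have e1 : ((n-2:ℕ):ℝ) = (n:ℝ) - 2 := by
        push_cast [Nat.cast_sub (by omega : 2 ≤ n)]; ring
      have e2 : (n-2) + 2 = n := by omega
      rw [e1, e2, show (n:ℝ) - 2 + 1 = (n:ℝ) - 1 from by ring]
      exact ell_le_d n hn
    calc p * ((K:ℝ) * (1-p)^(K+1)) ≤ ((K:ℝ)/((K:ℝ)+1))^(K+2) := chain1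
      _ ≤ _ := le_trans chain2 chain3

lemma int_le_const {Ω : Type*} [MeasurableSpace Ω] (μ : Measure Ω) [IsProbabilityMeasure μ]
    (f : Ω → ℝ) (C : ℝ) (hC : 0 ≤ C) (h : ∀ ω, f ω ≤ C) : ∫ ω, f ω ∂μ ≤ C := by
  by_cases hf : Integrable f μ
  · calc ∫ ω, f ω ∂μ ≤ ∫ _, C ∂μ := integral_mono hf (integrable_const C) h
      _ = C := by simp
  · rw [integral_undef hf]; exact hC

lemma sum_Icc_shift (f : ℕ → ℝ) (m : ℕ) :
    ∑ t ∈ Finset.Icc 1 m, f t = ∑ k ∈ Finset.range m, f (k+1) := by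
  induction m with
  | zero => simp
  | succ m ih => rw [Finset.sum_Icc_succ_top (by omega : 1 ≤ m+1), Finset.sum_range_succ, ih]


set_option linter.unusedVariables false

set_option maxHeartbeats 1000000

theorem stmt15
    {Ω : Type*} [MeasurableSpace Ω] (μ : Measure Ω) [IsProbabilityMeasure μ]
    (n : ℕ) (X : ℕ → Ω → ℝ)
    (hmeas : ∀ i, Measurable (X i))
    (hindep : iIndepFun (fun i : Fin n => X (i.1 + 1)) μ)
    (hident : ∀ i ∈ Set.Icc 1 n, IdentDistrib (X i) (X 1) μ μ)
    (hval : ∀ i ∈ Set.Icc 1 n, ∀ ω, X i ω ∈ Set.Icc (0:ℝ) 1)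
    (c : ℝ) (Y : ℕ → Ω → ℝ) (hY : ∀ i ω, Y i ω = X i ω - i * c)
    (hn : 2 ≤ n) (hc : 0 < c) (hEX : (∫ ω, X 1 ω ∂μ) ≤ c) :
    Mn μ Y n - Vn μ Y n ≤ (((n:ℝ) - 1) * (1 - 1/((n:ℝ)+1)) ^ n / ((n:ℝ)+1)) := by
  classical
  set p : ℝ := ∫ ω, X 1 ω ∂μ with hpdef
  have h1n : (1:ℕ) ∈ Set.Icc 1 n := ⟨le_refl 1, by omega⟩
  have hval' : ∀ i, 1 ≤ i → i ≤ n → ∀ ω, 0 ≤ X i ω ∧ X i ω ≤ 1 := by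
    intro i h1 h2 ω
    exact ⟨(hval i ⟨h1, h2⟩ ω).1, (hval i ⟨h1, h2⟩ ω).2⟩
  have hintX : ∀ i, 1 ≤ i → i ≤ n → Integrable (X i) μ := by
    intro i h1 h2
    apply Integrable.mono' (integrable_const (1:ℝ)) (hmeas i).aestronglyMeasurable
    apply ae_of_all
    intro ω
    rw [Real.norm_eq_abs, abs_le]
    constructor
    · linarith [(hval' i h1 h2 ω).1]
    · exact (hval' i h1 h2 ω).2
  have hmean : ∀ i, 1 ≤ i → i ≤ n → ∫ ω, X i ω ∂μ = p := by
    intro i h1 h2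
    exact (hident i ⟨h1, h2⟩).integral_eq
  have hp0 : 0 ≤ p := integral_nonneg (fun ω => (hval' 1 (le_refl 1) (by omega) ω).1)
  have hp1 : p ≤ 1 := int_le_const μ _ 1 zero_le_one (fun ω => (hval' 1 (le_refl 1) (by omega) ω).2)
  have hYmeas : ∀ i, Measurable (Y i) := by
    intro i
    have : Y i = fun ω => X i ω - (i:ℝ) * c := funext (hY i)
    rw [this]
    exact (hmeas i).sub measurable_const
  -- Part A : Vn lower bound
  have hbdd : BddAbove {r | ∃ τ, IsStopRule Y n τ ∧ r = ∫ ω, Y (τ ω) ω ∂μ} := by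
    refine ⟨1, fun r hr => ?_⟩
    obtain ⟨τ, hτ, rfl⟩ := hr
    apply int_le_const μ _ 1 zero_le_one
    intro ω
    have hmem := Finset.mem_Icc.mp (hτ.1 ω)
    rw [hY]
    have hx := (hval' (τ ω) hmem.1 hmem.2 ω).2
    have h1 : (1:ℝ) ≤ (τ ω : ℝ) := by exact_mod_cast hmem.1
    nlinarith
  have hVmem : (p - c) ∈ {r | ∃ τ, IsStopRule Y n τ ∧ r = ∫ ω, Y (τ ω) ω ∂μ} := by
    refine ⟨fun _ => 1, ⟨fun ω => show (1:ℕ) ∈ Finset.Icc 1 n from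
      Finset.mem_Icc.mpr ⟨le_refl 1, by omega⟩, ?_⟩, ?_⟩
    · intro i hi
      by_cases h : i = 1
      · subst h
        have he : {ω : Ω | (1:ℕ) = 1} = Set.univ := by ext ω; simp
        rw [he]; exact @MeasurableSet.univ Ω (priorSigma Y 1)
      · have he : {ω : Ω | (1:ℕ) = i} = ∅ := by ext ω; simp [Ne.symm h]
        rw [he]; exact @MeasurableSet.empty Ω (priorSigma Y i)
    · have e : ∀ ω, Y ((fun (_ : Ω) => 1) ω) ω = X 1 ω - c := by
        intro ω; rw [hY]; push_cast; ring
      rw [integral_congr_ae (ae_of_all μ e), integral_sub (hintX 1 (le_refl 1) (by omega))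
        (integrable_const c), integral_const]
      simp [hpdef]
  have hV : p - c ≤ Vn μ Y n := le_csSup hbdd hVmem
  -- definitions
  set Q : ℕ → Ω → ℝ := fun t ω => ∏ j ∈ Finset.Icc 1 t, (1 - X j ω) with hQdef
  set A : ℕ → ℝ := fun t => max (1 - ((t:ℝ) - 1) * c) 0 with hAdef
  set g : Ω → ℝ := fun ω => -c + ∑ t ∈ Finset.Icc 1 n, A t * (Q (t-1) ω * X t ω) with hgdef
  have hQmeas : ∀ t, Measurable (Q t) := by
    intro t
    apply Finset.measurable_prod
    intro j _
    exact measurable_const.sub (hmeas j)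
  have hQ01 : ∀ t, t ≤ n → ∀ ω, 0 ≤ Q t ω ∧ Q t ω ≤ 1 := by
    intro t ht ω
    constructor
    · apply Finset.prod_nonneg
      intro j hj
      rcases Finset.mem_Icc.mp hj with ⟨hj1, hj2⟩
      linarith [(hval' j hj1 (by omega) ω).2]
    · apply Finset.prod_le_one
      · intro j hj
        rcases Finset.mem_Icc.mp hj with ⟨hj1, hj2⟩
        linarith [(hval' j hj1 (by omega) ω).2]
      · intro j hj
        rcases Finset.mem_Icc.mp hj with ⟨hj1, hj2⟩
        linarith [(hval' j hj1 (by omega) ω).1]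
  -- independence
  have hIndepQX : ∀ t, 1 ≤ t → t ≤ n → IndepFun (Q (t-1)) (X t) μ := by
    intro t ht1 htn
    set φ : Fin n → ℝ → ℝ := fun i => if i.1 + 1 < t then (fun x => 1 - x) else id with hφ
    have hφm : ∀ i, Measurable (φ i) := by
      intro i
      rw [hφ]
      by_cases h : i.1 + 1 < t
      · simp only [if_pos h]
        exact measurable_const.sub measurable_id
      · simp only [if_neg h]
        exact measurable_id
    have hcomp : iIndepFun
        (fun i : Fin n => φ i ∘ (fun ω => X (i.1 + 1) ω)) μ := hindep.comp φ hφm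
    set s : Finset (Fin n) := Finset.univ.filter (fun i => i.1 + 1 < t) with hs
    have hi0mem : (⟨t - 1, by omega⟩ : Fin n) ∉ s := by
      rw [hs]
      simp only [Finset.mem_filter, Finset.mem_univ, true_and]
      omega
    have hIF := hcomp.indepFun_finsetProd_of_notMem
      (fun i => (hφm i).comp (hmeas (i.1+1))) hi0mem
    have hright : (φ (⟨t-1, by omega⟩ : Fin n) ∘ (fun ω => X ((⟨t-1, by omega⟩ : Fin n).1 + 1) ω))
        = X t := by
      funext ω
      rw [hφ]
      simp only [Function.comp_apply]
      rw [if_neg (by simp; omega)]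
      simp only [id_eq]
      congr 2
      omega
    have hleft : (∏ j ∈ s, (φ j ∘ (fun ω => X (j.1 + 1) ω))) = Q (t-1) := by
      funext ω
      rw [Finset.prod_apply, hQdef]
      refine Finset.prod_bij' (fun (j : Fin n) _ => j.1 + 1)
        (fun k hk => (⟨k - 1, by
          have := Finset.mem_Icc.mp hk
          omega⟩ : Fin n)) ?_ ?_ ?_ ?_ ?_
      · intro a ha
        rw [hs] at ha
        simp only [Finset.mem_filter, Finset.mem_univ, true_and] at ha
        exact Finset.mem_Icc.mpr (by omega)
      · intro k hk
        have hk' := Finset.mem_Icc.mp hk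
        rw [hs]
        simp only [Finset.mem_filter, Finset.mem_univ, true_and]
        omega
      · intro a ha
        rw [hs] at ha
        simp only [Finset.mem_filter, Finset.mem_univ, true_and] at ha
        apply Fin.ext
        simp
      · intro k hk
        have hk' := Finset.mem_Icc.mp hk
        simp
        omega
      · intro a ha
        rw [hs] at ha
        simp only [Finset.mem_filter, Finset.mem_univ, true_and] at ha
        simp only [Function.comp_apply]
        show (if (a:ℕ) + 1 < t then (fun x => 1 - x) else id) (X ((a:ℕ) + 1) ω) = 1 - X ((a:ℕ)+1) ω
        rw [if_pos ha]
    rw [hleft, hright] at hIF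
    exact hIF
  have hQmean : ∀ t, t ≤ n - 1 → ∫ ω, Q t ω ∂μ = (1-p)^t := by
    intro t
    induction t with
    | zero => intro _; simp [hQdef]
    | succ t ih =>
        intro ht
        have hq : Q (t+1) = Q t * (fun ω => 1 - X (t+1) ω) := by
          funext ω
          rw [hQdef]
          exact Finset.prod_Icc_succ_top (by omega : 1 ≤ t+1) _
        have hind : IndepFun (Q t) (X (t+1)) μ := by
          have h := hIndepQX (t+1) (by omega) (by omega)
          simpa using h
        have hind2 : IndepFun (Q t) (fun ω => 1 - X (t+1) ω) μ := by
          have h := hind.comp (φ := (id : ℝ → ℝ)) (ψ := fun x : ℝ => 1 - x)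
            measurable_id (measurable_const.sub measurable_id)
          simpa [Function.comp_def] using h
        have hQtint : Integrable (Q t) μ := by
          apply Integrable.mono' (integrable_const (1:ℝ)) (hQmeas t).aestronglyMeasurable
          apply ae_of_all
          intro ω
          rw [Real.norm_eq_abs, abs_le]
          have h01 := hQ01 t (by omega) ω
          constructor <;> linarith [h01.1, h01.2]
        have h1Xint : Integrable (fun ω => 1 - X (t+1) ω) μ :=
          (integrable_const (1:ℝ)).sub (hintX (t+1) (by omega) (by omega))
        calc ∫ ω, Q (t+1) ω ∂μ = ∫ ω, (Q t * (fun ω' => 1 - X (t+1) ω')) ω ∂μ := by rw [hq]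
          _ = (∫ ω, Q t ω ∂μ) * ∫ ω, (1 - X (t+1) ω) ∂μ :=
              hind2.integral_mul_eq_mul_integral hQtint.aestronglyMeasurable h1Xint.aestronglyMeasurable
          _ = (1-p)^(t+1) := by
              rw [ih (by omega), integral_sub (integrable_const 1)
                (hintX (t+1) (by omega) (by omega)), integral_const, hmean (t+1) (by omega) (by omega)]
              simp [pow_succ]
  have hprodmean : ∀ t, 1 ≤ t → t ≤ n → ∫ ω, Q (t-1) ω * X t ω ∂μ = (1-p)^(t-1) * p := by
    intro t ht1 htn
    have hind := hIndepQX t ht1 htn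
    have hQint : Integrable (Q (t-1)) μ := by
      apply Integrable.mono' (integrable_const (1:ℝ)) (hQmeas (t-1)).aestronglyMeasurable
      apply ae_of_all
      intro ω
      rw [Real.norm_eq_abs, abs_le]
      have := hQ01 (t-1) (by omega) ω
      constructor <;> linarith [this.1, this.2]
    calc ∫ ω, Q (t-1) ω * X t ω ∂μ = ∫ ω, (Q (t-1) * X t) ω ∂μ := rfl
      _ = (∫ ω, Q (t-1) ω ∂μ) * ∫ ω, X t ω ∂μ :=
          hind.integral_mul_eq_mul_integral hQint.aestronglyMeasurable (hintX t ht1 htn).aestronglyMeasurable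
      _ = (1-p)^(t-1) * p := by rw [hQmean (t-1) (by omega), hmean t ht1 htn]
  -- pointwise bound
  have hpt : ∀ ω, ∀ i ∈ Finset.Icc 1 n, Y i ω ≤ g ω := by
    intro ω i hi
    obtain ⟨hi1, hin⟩ := Finset.mem_Icc.mp hi
    have hA0 : ∀ t, 0 ≤ A t := fun t => le_max_right _ 0
    have hQX0 : ∀ t, 1 ≤ t → t ≤ n → 0 ≤ Q (t-1) ω * X t ω := by
      intro t h1 h2
      exact mul_nonneg (hQ01 (t-1) (by omega) ω).1 (hval' t h1 h2 ω).1
    have htel : ∀ m, ∑ t ∈ Finset.Icc 1 m, Q (t-1) ω * X t ω = 1 - Q m ω := by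
      intro m
      induction m with
      | zero => simp [hQdef]
      | succ m ih =>
          rw [Finset.sum_Icc_succ_top (by omega : 1 ≤ m+1), ih]
          have hq : Q (m+1) ω = Q m ω * (1 - X (m+1) ω) := by
            rw [hQdef]
            exact Finset.prod_Icc_succ_top (by omega : 1 ≤ m+1) _
          rw [show (m+1)-1 = m from rfl, hq]
          ring
    have hstep2 : A i * (1 - Q i ω) ≤ ∑ t ∈ Finset.Icc 1 i, A t * (Q (t-1) ω * X t ω) := by
      rw [← htel i, Finset.mul_sum]
      apply Finset.sum_le_sum
      intro t ht
      rcases Finset.mem_Icc.mp ht with ⟨ht1, hti⟩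
      apply mul_le_mul_of_nonneg_right _ (hQX0 t ht1 (by omega))
      apply max_le_max _ (le_refl (0:ℝ))
      have hcast : (t:ℝ) ≤ (i:ℝ) := by exact_mod_cast hti
      have : ((t:ℝ) - 1) * c ≤ ((i:ℝ) - 1) * c := by
        apply mul_le_mul_of_nonneg_right _ hc.le
        linarith
      linarith
    have hsub : ∑ t ∈ Finset.Icc 1 i, A t * (Q (t-1) ω * X t ω)
        ≤ ∑ t ∈ Finset.Icc 1 n, A t * (Q (t-1) ω * X t ω) := by
      apply Finset.sum_le_sum_of_subset_of_nonneg (Finset.Icc_subset_Icc_right hin)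
      intro t ht _
      rcases Finset.mem_Icc.mp ht with ⟨ht1, htn⟩
      exact mul_nonneg (hA0 t) (hQX0 t ht1 htn)
    have hQi : Q i ω ≤ 1 - X i ω := by
      have he : Q i ω = Q (i-1) ω * (1 - X i ω) := by
        rw [hQdef]
        have h := Finset.prod_Icc_succ_top (by omega : 1 ≤ (i-1)+1) (fun j => 1 - X j ω)
        rw [show (i-1)+1 = i from by omega] at h
        exact h
      rw [he]
      have h1 := (hQ01 (i-1) (by omega) ω).2
      have h2 := (hval' i hi1 hin ω).2
      have h0 := (hQ01 (i-1) (by omega) ω).1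
      nlinarith
    have hXi := hval' i hi1 hin ω
    have hicast : (1:ℝ) ≤ (i:ℝ) := by exact_mod_cast hi1
    have e1 : A i * X i ω ≤ A i * (1 - Q i ω) := by
      apply mul_le_mul_of_nonneg_left _ (hA0 i)
      linarith
    have e2 : (1 - ((i:ℝ)-1)*c) * X i ω ≤ A i * X i ω :=
      mul_le_mul_of_nonneg_right (le_max_left _ _) hXi.1
    have e3 : X i ω - ((i:ℝ)-1)*c ≤ (1 - ((i:ℝ)-1)*c) * X i ω := by
      have hnn : 0 ≤ (((i:ℝ)-1)*c) * (1 - X i ω) :=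
        mul_nonneg (mul_nonneg (by linarith) hc.le) (by linarith [hXi.2])
      nlinarith [hnn]
    rw [hY]
    show X i ω - (i:ℝ) * c ≤ -c + ∑ t ∈ Finset.Icc 1 n, A t * (Q (t-1) ω * X t ω)
    linarith
  -- integral of g
  have hterm_int : ∀ t ∈ Finset.Icc 1 n, Integrable (fun ω => A t * (Q (t-1) ω * X t ω)) μ := by
    intro t ht
    rcases Finset.mem_Icc.mp ht with ⟨ht1, htn⟩
    apply Integrable.const_mul
    apply Integrable.mono' (integrable_const (1:ℝ))
      (((hQmeas (t-1)).mul (hmeas t)).aestronglyMeasurable)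
    apply ae_of_all
    intro ω
    rw [Real.norm_eq_abs, abs_le]
    have h1 := hQ01 (t-1) (by omega) ω
    have h2 := hval' t ht1 htn ω
    rw [Pi.mul_apply]
    constructor <;> nlinarith [h1.1, h1.2, h2.1, h2.2]
  have hgint_val : ∫ ω, g ω ∂μ = -c + ∑ t ∈ Finset.Icc 1 n, A t * ((1-p)^(t-1) * p) := by
    rw [hgdef]
    rw [integral_add (integrable_const (-c)) (integrable_finset_sum _ hterm_int)]
    rw [integral_const]
    simp only [probReal_univ, smul_eq_mul, one_mul]
    congr 1
    rw [integral_finset_sum _ hterm_int]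
    apply Finset.sum_congr rfl
    intro t ht
    rcases Finset.mem_Icc.mp ht with ⟨ht1, htn⟩
    rw [MeasureTheory.integral_const_mul, hprodmean t ht1 htn]
  -- Mn bound
  have hMle : Mn μ Y n ≤ ∫ ω, g ω ∂μ := by
    have hne : (Finset.Icc 1 n).Nonempty := ⟨1, Finset.mem_Icc.mpr ⟨le_refl 1, by omega⟩⟩
    have hfeq : ∀ ω, sSup ((fun i => Y i ω) '' Set.Icc 1 n)
        = (Finset.Icc 1 n).sup' hne (fun i => Y i ω) := by
      intro ω
      rw [Finset.sup'_eq_csSup_image, Finset.coe_Icc]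
    have hfmeas : Measurable (fun ω => sSup ((fun i => Y i ω) '' Set.Icc 1 n)) := by
      have he : (fun ω => sSup ((fun i => Y i ω) '' Set.Icc 1 n))
          = (Finset.Icc 1 n).sup' hne Y := by
        funext ω
        rw [hfeq ω, Finset.sup'_apply]
      rw [he]
      exact Finset.measurable_sup' hne (fun i _ => hYmeas i)
    have hfint : Integrable (fun ω => sSup ((fun i => Y i ω) '' Set.Icc 1 n)) μ := by
      apply Integrable.mono' (integrable_const (1+c)) hfmeas.aestronglyMeasurable
      apply ae_of_all
      intro ω
      rw [Real.norm_eq_abs, abs_le, hfeq ω]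
      constructor
      · refine le_trans ?_ (Finset.le_sup' (fun i => Y i ω)
          (Finset.mem_Icc.mpr ⟨le_refl 1, by omega⟩ : (1:ℕ) ∈ Finset.Icc 1 n))
        rw [hY]
        have h0 := (hval' 1 le_rfl (by omega) ω).1
        push_cast
        linarith
      · apply Finset.sup'_le
        intro i hii
        rcases Finset.mem_Icc.mp hii with ⟨h1, h2⟩
        rw [hY]
        have hx1 := (hval' i h1 h2 ω).2
        have hcast : (1:ℝ) ≤ (i:ℝ) := by exact_mod_cast h1
        nlinarith
    have hgint : Integrable g μ := by
      have hsum : Integrable (fun ω => ∑ t ∈ Finset.Icc 1 n, A t * (Q (t-1) ω * X t ω)) μ :=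
        integrable_finset_sum _ hterm_int
      rw [hgdef]
      exact (integrable_const (-c)).add hsum
    rw [Mn]
    apply integral_mono hfint hgint
    intro ω
    show sSup ((fun i => Y i ω) '' Set.Icc 1 n) ≤ g ω
    rw [hfeq ω]
    apply Finset.sup'_le
    intro i hii
    exact hpt ω i hii
  -- combine
  have hcomb : Mn μ Y n - Vn μ Y n
      ≤ p * ∑ k ∈ Finset.Icc 1 (n-1), (1-p)^k * max (1 - (k:ℝ)*c) 0 := by
    have h1 : Mn μ Y n - Vn μ Y n ≤ (∫ ω, g ω ∂μ) - (p - c) := by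
      apply sub_le_sub hMle hV
    rw [hgint_val] at h1
    have h2 : -c + (∑ t ∈ Finset.Icc 1 n, A t * ((1-p)^(t-1) * p)) - (p - c)
        = p * ∑ k ∈ Finset.Icc 1 (n-1), (1-p)^k * max (1 - (k:ℝ)*c) 0 := by
      have hL : ∑ t ∈ Finset.Icc 1 n, A t * ((1-p)^(t-1) * p)
          = p + ∑ i ∈ Finset.range (n-1), A (i+2) * ((1-p)^(i+1) * p) := by
        rw [sum_Icc_shift (fun t => A t * ((1-p)^(t-1) * p)) n]
        have hrw : Finset.range n = Finset.range ((n-1)+1) := by congr 1; omega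
        rw [hrw, Finset.sum_range_succ']
        have hA1 : A (0+1) * ((1-p)^((0+1)-1) * p) = p := by
          rw [hAdef]
          norm_num
        rw [hA1, add_comm]
        rfl
      have hR : ∑ k ∈ Finset.Icc 1 (n-1), (1-p)^k * max (1 - (k:ℝ)*c) 0
          = ∑ i ∈ Finset.range (n-1), (1-p)^(i+1) * max (1 - ((i:ℝ)+1)*c) 0 := by
        rw [sum_Icc_shift (fun k => (1-p)^k * max (1 - (k:ℝ)*c) 0) (n-1)]
        apply Finset.sum_congr rfl
        intro i _
        push_cast
        norm_num
      rw [hL, hR, Finset.mul_sum]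
      have hterm : ∀ i ∈ Finset.range (n-1),
          A (i+2) * ((1-p)^(i+1) * p) = p * ((1-p)^(i+1) * max (1 - ((i:ℝ)+1)*c) 0) := by
        intro i _
        rw [hAdef]
        have : ((i+2:ℕ):ℝ) - 1 = (i:ℝ) + 1 := by push_cast; ring
        simp only []
        rw [this]
        ring
      rw [Finset.sum_congr rfl hterm]
      ring
    rw [h2] at h1
    exact h1
  refine le_trans hcomb ?_
  exact elem_main n hn p c hp0 hp1 hEX
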